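/- Let A,B > 0 and a,b,c,d ∈ ℝ, and suppose either (a,b,c are positive and d < 0) or (a,c are positive and b,d < 0). If f(t) := 1 − A t^a(1−t)^b − B t^c(1−t)^d has no degenerate roots in (0,1), then f has fewer than 6 roots in the open interval (0,1). -/

import Mathlib

open Real Set




lemma rolle_encard {F : ℝ → ℝ} {x y : ℝ} (hd : ∀ t ∈ Ioo x y, DifferentiableAt ℝ F t)
    (n : ℕ) (h : ((n:ℕ∞)+1) ≤ {t ∈ Ioo x y | F t = 0}.encard) :
    (n : ℕ∞) ≤ {t ∈ Ioo x y | deriv F t = 0}.encard := by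
  obtain ⟨T, hTsub, hTcard⟩ := Set.exists_subset_encard_eq h
  have hTfin : T.Finite := by
    apply Set.finite_of_encard_eq_coe (k := n+1); rw [hTcard]; push_cast; ring
  have hs : hTfin.toFinset.card = n + 1 := by
    have := hTfin.encard_eq_coe_toFinset_card
    rw [hTcard] at this
    exact_mod_cast this.symm
  set e := hTfin.toFinset.orderIsoOfFin hs with he
  set X : Fin (n+1) → ℝ := fun i => (e i : ℝ) with hX
  have hXmono : StrictMono X := fun i j hij => e.strictMono hij
  have hXmem : ∀ i, X i ∈ Ioo x y ∧ F (X i) = 0 := by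
    intro i
    have : (X i) ∈ T := by
      have := (e i).2
      rw [hTfin.mem_toFinset] at this
      exact this
    exact hTsub this
  have key : ∀ i : Fin n, ∃ cc, cc ∈ Ioo (X i.castSucc) (X i.succ) ∧ deriv F cc = 0 := by
    intro i
    have hlt : X i.castSucc < X i.succ := hXmono (by simp [Fin.castSucc_lt_succ_iff])
    have hsub : Icc (X i.castSucc) (X i.succ) ⊆ Ioo x y := by
      intro t ht
      exact ⟨lt_of_lt_of_le (hXmem i.castSucc).1.1 ht.1, lt_of_le_of_lt ht.2 (hXmem i.succ).1.2⟩
    have hcont : ContinuousOn F (Icc (X i.castSucc) (X i.succ)) := fun t ht =>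
      ((hd t (hsub ht)).continuousAt).continuousWithinAt
    obtain ⟨cc, hcc1, hcc2⟩ := exists_deriv_eq_zero hlt hcont
      (by rw [(hXmem i.castSucc).2, (hXmem i.succ).2])
    exact ⟨cc, hcc1, hcc2⟩
  choose c hc1 hc2 using key
  have hcmono : StrictMono c := by
    intro i j hij
    calc c i < X i.succ := (hc1 i).2
    _ ≤ X j.castSucc := hXmono.monotone (by simp [Fin.le_castSucc_iff]; omega)
    _ < c j := (hc1 j).1
  have hcmem : ∀ i, c i ∈ {t ∈ Ioo x y | deriv F t = 0} := by
    intro i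
    refine ⟨⟨lt_trans (hXmem i.castSucc).1.1 (hc1 i).1, lt_trans (hc1 i).2 (hXmem i.succ).1.2⟩, hc2 i⟩
  calc (n : ℕ∞) = (Set.range c).encard := by
        rw [← Set.image_univ, (hcmono.injective.injOn).encard_image]
        simp [Set.encard_univ]
    _ ≤ _ := Set.encard_le_encard (Set.range_subset_iff.mpr hcmem)

lemma f_hasDeriv (a b c d A B : ℝ) {t : ℝ} (ht : t ∈ Ioo (0:ℝ) 1) :
    HasDerivAt (fun t : ℝ => 1 - A * t ^ a * (1 - t) ^ b - B * t ^ c * (1 - t) ^ d)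
      (-(A * t^(a-1) * (1-t)^(b-1) * (a - (a+b)*t)
        + B * t^(c-1) * (1-t)^(d-1) * (c - (c+d)*t))) t := by
  obtain ⟨ht0, ht1⟩ := ht
  have h1t : (0:ℝ) < 1 - t := by linarith
  have hsub : HasDerivAt (fun t : ℝ => 1 - t) (-1) t := by
    simpa using (hasDerivAt_id t).const_sub 1
  have h₁ : HasDerivAt (fun t : ℝ => t ^ a) (a * t ^ (a-1)) t :=
    Real.hasDerivAt_rpow_const (Or.inl ht0.ne')
  have h₂ : HasDerivAt (fun t : ℝ => (1-t) ^ b) (b * (1-t) ^ (b-1) * (-1)) t :=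
    (Real.hasDerivAt_rpow_const (Or.inl h1t.ne')).comp t hsub
  have h₃ : HasDerivAt (fun t : ℝ => t ^ c) (c * t ^ (c-1)) t :=
    Real.hasDerivAt_rpow_const (Or.inl ht0.ne')
  have h₄ : HasDerivAt (fun t : ℝ => (1-t) ^ d) (d * (1-t) ^ (d-1) * (-1)) t :=
    (Real.hasDerivAt_rpow_const (Or.inl h1t.ne')).comp t hsub
  have hg := ((h₁.mul h₂).const_mul A)
  have hh := ((h₃.mul h₄).const_mul B)
  have hfin := ((hg.const_sub 1).sub hh)
  have e1 : t ^ a = t ^ (a-1) * t := by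
    rw [← Real.rpow_add_one ht0.ne']; ring_nf
  have e2 : (1-t) ^ b = (1-t) ^ (b-1) * (1-t) := by
    rw [← Real.rpow_add_one h1t.ne']; ring_nf
  have e3 : t ^ c = t ^ (c-1) * t := by
    rw [← Real.rpow_add_one ht0.ne']; ring_nf
  have e4 : (1-t) ^ d = (1-t) ^ (d-1) * (1-t) := by
    rw [← Real.rpow_add_one h1t.ne']; ring_nf
  refine HasDerivAt.congr_of_eventuallyEq (hfin.congr_deriv ?_) (Filter.EventuallyEq.of_eq ?_)
  swap
  · funext u; simp [mul_assoc]
  · rw [e1, e2, e3, e4]; ring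

noncomputable def psiAB (a b c d A B : ℝ) : ℝ → ℝ := fun t =>
  Real.log A - Real.log B + (a-c)*Real.log t + (b-d)*Real.log (1-t)
    + Real.log ((a+b)*t - a) - Real.log (c - (c+d)*t)

lemma logG_eq (A a b : ℝ) (hA : 0 < A) {t : ℝ} (h1 : 0 < t) (h2 : 0 < 1 - t) :
    Real.log (A * t^(a-1) * (1-t)^(b-1))
      = Real.log A + (a-1)*Real.log t + (b-1)*Real.log (1-t) := by
  have p1 : (0:ℝ) < t ^ (a-1) := Real.rpow_pos_of_pos h1 _
  have p2 : (0:ℝ) < (1-t) ^ (b-1) := Real.rpow_pos_of_pos h2 _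
  rw [Real.log_mul (by positivity) p2.ne', Real.log_mul hA.ne' p1.ne',
    Real.log_rpow h1, Real.log_rpow h2]

lemma claimA1 (a b c d A B : ℝ) (hA : 0 < A) (hB : 0 < B)
    (hab : 0 < a + b) {t : ℝ} (ht : t ∈ Ioo (0:ℝ) 1)
    (hq : 0 < c - (c+d)*t)
    (h0 : A * t^(a-1)*(1-t)^(b-1) * (a-(a+b)*t) + B*t^(c-1)*(1-t)^(d-1)*(c-(c+d)*t) = 0) :
    a/(a+b) < t ∧ psiAB a b c d A B t = 0 := by
  obtain ⟨h1, h2⟩ := ht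
  have h2' : (0:ℝ) < 1 - t := by linarith
  have hG : (0:ℝ) < A * t^(a-1)*(1-t)^(b-1) := by
    have := Real.rpow_pos_of_pos h1 (a-1); have := Real.rpow_pos_of_pos h2' (b-1); positivity
  have hH : (0:ℝ) < B * t^(c-1)*(1-t)^(d-1) := by
    have := Real.rpow_pos_of_pos h1 (c-1); have := Real.rpow_pos_of_pos h2' (d-1); positivity
  have hHq : (0:ℝ) < B*t^(c-1)*(1-t)^(d-1)*(c-(c+d)*t) := mul_pos hH hq
  have hpneg : a - (a+b)*t < 0 := by
    by_contra hcon; push_neg at hcon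
    nlinarith [mul_nonneg hG.le hcon]
  have htJ : a/(a+b) < t := by rw [div_lt_iff₀ hab]; nlinarith
  have heq : (A * t^(a-1)*(1-t)^(b-1)) * ((a+b)*t - a)
      = (B*t^(c-1)*(1-t)^(d-1)) * (c-(c+d)*t) := by nlinarith
  have hlogeq := congrArg Real.log heq
  rw [Real.log_mul hG.ne' (by linarith), Real.log_mul hH.ne' hq.ne',
    logG_eq A a b hA h1 h2', logG_eq B c d hB h1 h2'] at hlogeq
  refine ⟨htJ, ?_⟩
  simp only [psiAB]
  linarith

lemma claimA2 (a b c d A B : ℝ) (hA : 0 < A) (hB : 0 < B)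
    (hab : 0 < a + b) {t : ℝ} (h1 : 0 < t) (h2 : t < 1)
    (h3 : a/(a+b) < t) (hq : 0 < c - (c+d)*t)
    (hpsi : psiAB a b c d A B t = 0) :
    A * t^(a-1)*(1-t)^(b-1) * (a-(a+b)*t) + B*t^(c-1)*(1-t)^(d-1)*(c-(c+d)*t) = 0 := by
  have h2' : (0:ℝ) < 1 - t := by linarith
  have hG : (0:ℝ) < A * t^(a-1)*(1-t)^(b-1) := by
    have := Real.rpow_pos_of_pos h1 (a-1); have := Real.rpow_pos_of_pos h2' (b-1); positivity
  have hH : (0:ℝ) < B * t^(c-1)*(1-t)^(d-1) := by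
    have := Real.rpow_pos_of_pos h1 (c-1); have := Real.rpow_pos_of_pos h2' (d-1); positivity
  have hpneg : (0:ℝ) < (a+b)*t - a := by rw [div_lt_iff₀ hab] at h3; nlinarith
  simp only [psiAB] at hpsi
  have hlogeq : Real.log ((A * t^(a-1)*(1-t)^(b-1)) * ((a+b)*t - a))
      = Real.log ((B*t^(c-1)*(1-t)^(d-1)) * (c-(c+d)*t)) := by
    rw [Real.log_mul hG.ne' hpneg.ne', Real.log_mul hH.ne' hq.ne',
      logG_eq A a b hA h1 h2', logG_eq B c d hB h1 h2']
    linarith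
  have heq := Real.log_injOn_pos (Set.mem_Ioi.mpr (mul_pos hG hpneg))
    (Set.mem_Ioi.mpr (mul_pos hH hq)) hlogeq
  nlinarith [heq]

lemma psi_hasDeriv (a b c d A B : ℝ) (hab : 0 < a + b) {t : ℝ}
    (h1 : 0 < t) (h2 : t < 1) (h3 : a/(a+b) < t) (hq : 0 < c - (c+d)*t) :
    HasDerivAt (psiAB a b c d A B)
      ((a-c)/t - (b-d)/(1-t) + (a+b)/((a+b)*t-a) + (c+d)/(c-(c+d)*t)) t := by
  have h2' : (0:ℝ) < 1 - t := by linarith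
  have h3' : (0:ℝ) < (a+b)*t - a := by rw [div_lt_iff₀ hab] at h3; nlinarith
  have hsub : HasDerivAt (fun t : ℝ => 1 - t) (-1) t := by
    simpa using (hasDerivAt_id t).const_sub 1
  have hL1 : HasDerivAt (fun t : ℝ => Real.log t) t⁻¹ t := Real.hasDerivAt_log h1.ne'
  have hL2 : HasDerivAt (fun t : ℝ => Real.log (1-t)) ((1-t)⁻¹ * (-1)) t :=
    (Real.hasDerivAt_log h2'.ne').comp t hsub
  have hin3 : HasDerivAt (fun t : ℝ => (a+b)*t - a) (a+b) t := by
    simpa using ((hasDerivAt_id t).const_mul (a+b)).sub_const a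
  have hL3 : HasDerivAt (fun t : ℝ => Real.log ((a+b)*t - a)) (((a+b)*t-a)⁻¹ * (a+b)) t :=
    by have := (Real.hasDerivAt_log h3'.ne').comp t hin3; exact this
  have hin4 : HasDerivAt (fun t : ℝ => c - (c+d)*t) (-(c+d)) t := by
    simpa using ((hasDerivAt_id t).const_mul (c+d)).const_sub c
  have hL4 : HasDerivAt (fun t : ℝ => Real.log (c - (c+d)*t)) ((c-(c+d)*t)⁻¹ * (-(c+d))) t :=
    by have := (Real.hasDerivAt_log hq.ne').comp t hin4; exact this
  have := ((((hL1.const_mul (a-c)).add (hL2.const_mul (b-d))).add hL3).sub hL4).const_add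
    (Real.log A - Real.log B)
  refine HasDerivAt.congr_of_eventuallyEq (this.congr_deriv ?_) (Filter.EventuallyEq.of_eq ?_)
  swap
  · ext u; simp only [psiAB, Pi.add_apply, Pi.sub_apply]; ring
  · field_simp
    ring


noncomputable def cubAB (a b c d : ℝ) : Polynomial ℝ :=
  Polynomial.C (a-c) * (1 - Polynomial.X) * (Polynomial.C (a+b) * Polynomial.X - Polynomial.C a)
      * (Polynomial.C c - Polynomial.C (c+d) * Polynomial.X)
  - Polynomial.C (b-d) * Polynomial.X * (Polynomial.C (a+b) * Polynomial.X - Polynomial.C a)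
      * (Polynomial.C c - Polynomial.C (c+d) * Polynomial.X)
  + Polynomial.C (a+b) * Polynomial.X * (1 - Polynomial.X)
      * (Polynomial.C c - Polynomial.C (c+d) * Polynomial.X)
  + Polynomial.C (c+d) * Polynomial.X * (1 - Polynomial.X)
      * (Polynomial.C (a+b) * Polynomial.X - Polynomial.C a)

lemma cubAB_eval (a b c d t : ℝ) :
    (cubAB a b c d).eval t
      = (a-c)*(1-t)*((a+b)*t-a)*(c-(c+d)*t) - (b-d)*t*((a+b)*t-a)*(c-(c+d)*t)
        + (a+b)*t*(1-t)*(c-(c+d)*t) + (c+d)*t*(1-t)*((a+b)*t-a) := by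
  simp [cubAB]; try ring

lemma cubAB_natDegree (a b c d : ℝ) : (cubAB a b c d).natDegree ≤ 3 := by
  unfold cubAB; compute_degree

/-- Cases A and B: either `a, b, c > 0` and `d < 0`, or `a, c > 0` and `b, d < 0`.
If `f(t) = 1 − A t^a (1−t)^b − B t^c (1−t)^d` has no degenerate roots in `(0,1)`
(a root `ζ` is degenerate if `f ζ = 0` and `f' ζ = 0`), then `f` has fewer than 6
roots in `(0,1)`.  (`^` is `Real.rpow`.) -/
theorem fewer_than_six_roots_cases_AB
    (a b c d A B : ℝ) (hA : 0 < A) (hB : 0 < B)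
    (hcase : (0 < a ∧ 0 < b ∧ 0 < c ∧ d < 0) ∨ (0 < a ∧ 0 < c ∧ b < 0 ∧ d < 0))
    (f : ℝ → ℝ)
    (hf : f = fun t : ℝ => 1 - A * t ^ a * (1 - t) ^ b - B * t ^ c * (1 - t) ^ d)
    (hnd : ∀ t ∈ Set.Ioo (0 : ℝ) 1, f t = 0 → deriv f t ≠ 0) :
    {t ∈ Set.Ioo (0 : ℝ) 1 | f t = 0}.encard < 6 := by
  have ha0 : 0 < a := by rcases hcase with ⟨h,_⟩|⟨h,_⟩ <;> exact h
  have hc0 : 0 < c := by rcases hcase with ⟨_,_,h,_⟩|⟨_,h,_⟩ <;> exact h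
  have hd0 : d < 0 := by rcases hcase with ⟨_,_,_,h⟩|⟨_,_,_,h⟩ <;> exact h
  have hderiv : ∀ t ∈ Ioo (0:ℝ) 1, HasDerivAt f
      (-(A * t^(a-1) * (1-t)^(b-1) * (a - (a+b)*t)
        + B * t^(c-1) * (1-t)^(d-1) * (c - (c+d)*t))) t := by
    intro t ht; rw [hf]; exact f_hasDeriv a b c d A B ht
  have hdf : ∀ t ∈ Ioo (0:ℝ) 1, deriv f t
      = -(A * t^(a-1) * (1-t)^(b-1) * (a - (a+b)*t)
        + B * t^(c-1) * (1-t)^(d-1) * (c - (c+d)*t)) := fun t ht => (hderiv t ht).deriv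
  have hdiff : ∀ t ∈ Ioo (0:ℝ) 1, DifferentiableAt ℝ f t :=
    fun t ht => (hderiv t ht).differentiableAt
  have hqpos : ∀ t ∈ Ioo (0:ℝ) 1, (0:ℝ) < c - (c+d)*t := by
    rintro t ⟨h1, h2⟩; nlinarith
  have hGpos : ∀ t ∈ Ioo (0:ℝ) 1, (0:ℝ) < A * t^(a-1) * (1-t)^(b-1) := by
    rintro t ⟨h1, h2⟩
    have := Real.rpow_pos_of_pos h1 (a-1)
    have := Real.rpow_pos_of_pos (show (0:ℝ) < 1 - t by linarith) (b-1)
    positivity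
  have hHpos : ∀ t ∈ Ioo (0:ℝ) 1, (0:ℝ) < B * t^(c-1) * (1-t)^(d-1) := by
    rintro t ⟨h1, h2⟩
    have := Real.rpow_pos_of_pos h1 (c-1)
    have := Real.rpow_pos_of_pos (show (0:ℝ) < 1 - t by linarith) (d-1)
    positivity
  have rolle2 : ∀ u v : ℝ, u ∈ Ioo (0:ℝ) 1 → v ∈ Ioo (0:ℝ) 1 → f u = 0 → f v = 0 →
      u < v → ∃ m, m ∈ Ioo u v ∧ deriv f m = 0 ∧ m ∈ Ioo (0:ℝ) 1 := by
    intro u v hu hv hfu hfv huv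
    have hsub : Icc u v ⊆ Ioo (0:ℝ) 1 := fun s hs =>
      ⟨lt_of_lt_of_le hu.1 hs.1, lt_of_le_of_lt hs.2 hv.2⟩
    have hcont : ContinuousOn f (Icc u v) := fun s hs =>
      ((hdiff s (hsub hs)).continuousAt).continuousWithinAt
    obtain ⟨m, hm, hm0⟩ := exists_deriv_eq_zero huv hcont (by rw [hfu, hfv])
    exact ⟨m, hm, hm0, hsub ⟨le_of_lt hm.1, le_of_lt hm.2⟩⟩
  rcases hcase with ⟨ha, hb, hc, hd⟩ | ⟨ha, hc, hb, hd⟩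
  swap
  · -- Case B : f' < 0 on (0,1)
    have hneg : ∀ t ∈ Ioo (0:ℝ) 1, deriv f t < 0 := by
      intro t ht
      rw [hdf t ht]
      have h1 := mul_pos (hGpos t ht) (show (0:ℝ) < a - (a+b)*t by
        obtain ⟨h1, h2⟩ := ht; nlinarith)
      have h2 := mul_pos (hHpos t ht) (hqpos t ht)
      linarith
    refine lt_of_le_of_lt (Set.encard_le_one_iff.mpr ?_) (by norm_num)
    rintro u v ⟨hu, hfu⟩ ⟨hv, hfv⟩
    rcases lt_trichotomy u v with h|h|h
    · obtain ⟨m, _, hm0, hm1⟩ := rolle2 u v hu hv hfu hfv h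
      exact absurd hm0 (hneg m hm1).ne
    · exact h
    · obtain ⟨m, _, hm0, hm1⟩ := rolle2 v u hv hu hfv hfu h
      exact absurd hm0 (hneg m hm1).ne
  -- Case A
  have hab : 0 < a + b := by linarith
  have ht₀0 : 0 < a/(a+b) := div_pos ha hab
  have ht₀1 : a/(a+b) < 1 := (div_lt_one hab).mpr (by linarith)
  set ψ := psiAB a b c d A B with hψdef
  have claim1 : ∀ t ∈ Ioo (0:ℝ) 1, deriv f t = 0 → t ∈ Ioo (a/(a+b)) 1 ∧ ψ t = 0 := by
    intro t ht h0
    rw [hdf t ht] at h0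
    have := claimA1 a b c d A B hA hB hab ht (hqpos t ht) (by linarith)
    exact ⟨⟨this.1, ht.2⟩, this.2⟩
  have claim2 : ∀ t ∈ Ioo (a/(a+b)) 1, ψ t = 0 → deriv f t = 0 := by
    intro t ht hψ0
    have ht01 : t ∈ Ioo (0:ℝ) 1 := ⟨lt_trans ht₀0 ht.1, ht.2⟩
    rw [hdf t ht01]
    have := claimA2 a b c d A B hA hB hab ht01.1 ht01.2 ht.1 (hqpos t ht01) hψ0
    linarith
  have hψderiv : ∀ t ∈ Ioo (a/(a+b)) 1, HasDerivAt ψ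
      ((a-c)/t - (b-d)/(1-t) + (a+b)/((a+b)*t-a) + (c+d)/(c-(c+d)*t)) t := by
    intro t ht
    have ht01 : t ∈ Ioo (0:ℝ) 1 := ⟨lt_trans ht₀0 ht.1, ht.2⟩
    exact psi_hasDeriv a b c d A B hab ht01.1 ht01.2 ht.1 (hqpos t ht01)
  have hψdiff : ∀ t ∈ Ioo (a/(a+b)) 1, DifferentiableAt ℝ ψ t :=
    fun t ht => (hψderiv t ht).differentiableAt
  have hψd : ∀ t ∈ Ioo (a/(a+b)) 1, deriv ψ t
      = (a-c)/t - (b-d)/(1-t) + (a+b)/((a+b)*t-a) + (c+d)/(c-(c+d)*t) :=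
    fun t ht => (hψderiv t ht).deriv
  have hkey : ∀ t ∈ Ioo (a/(a+b)) 1,
      deriv ψ t * (t*(1-t)*((a+b)*t-a)*(c-(c+d)*t)) = (cubAB a b c d).eval t := by
    intro t ht
    have ht01 : t ∈ Ioo (0:ℝ) 1 := ⟨lt_trans ht₀0 ht.1, ht.2⟩
    have h1 : (0:ℝ) < t := ht01.1
    have h2 : (0:ℝ) < 1 - t := by have := ht01.2; linarith
    have h3 : (0:ℝ) < (a+b)*t - a := by
      have := ht.1; rw [div_lt_iff₀ hab] at this; nlinarith
    have h4 := hqpos t ht01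
    rw [hψd t ht, cubAB_eval]
    set p := (a+b)*t - a with hp
    set q := c - (c+d)*t with hq
    set s := 1 - t with hs
    field_simp
  by_contra hcon
  push_neg at hcon
  have h5 : ((5:ℕ):ℕ∞) ≤ {t ∈ Ioo (0:ℝ) 1 | deriv f t = 0}.encard := by
    apply rolle_encard hdiff 5
    have : ((5:ℕ):ℕ∞) + 1 = 6 := by norm_num
    rw [this]; exact hcon
  have hsubC : {t ∈ Ioo (0:ℝ) 1 | deriv f t = 0} ⊆ {t ∈ Ioo (a/(a+b)) 1 | ψ t = 0} := by
    rintro t ⟨ht, h0⟩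
    exact ⟨(claim1 t ht h0).1, (claim1 t ht h0).2⟩
  have h5' : ((5:ℕ):ℕ∞) ≤ {t ∈ Ioo (a/(a+b)) 1 | ψ t = 0}.encard :=
    le_trans h5 (Set.encard_le_encard hsubC)
  have h4' : ((4:ℕ):ℕ∞) ≤ {t ∈ Ioo (a/(a+b)) 1 | deriv ψ t = 0}.encard := by
    apply rolle_encard hψdiff 4
    have : ((4:ℕ):ℕ∞) + 1 = ((5:ℕ):ℕ∞) := by norm_num
    rw [this]; exact h5'
  by_cases hP : cubAB a b c d = 0
  · -- degenerate: ψ' ≡ 0 on J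
    have hψd0 : ∀ t ∈ Ioo (a/(a+b)) 1, deriv ψ t = 0 := by
      intro t ht
      have hk := hkey t ht
      rw [hP] at hk
      simp only [Polynomial.eval_zero] at hk
      have ht01 : t ∈ Ioo (0:ℝ) 1 := ⟨lt_trans ht₀0 ht.1, ht.2⟩
      have h1 : (0:ℝ) < t := ht01.1
      have h2 : (0:ℝ) < 1 - t := by have := ht01.2; linarith
      have h3 : (0:ℝ) < (a+b)*t - a := by
        have := ht.1; rw [div_lt_iff₀ hab] at this; nlinarith
      have h4 := hqpos t ht01
      have hD : (0:ℝ) < t*(1-t)*((a+b)*t-a)*(c-(c+d)*t) := by positivity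
      rcases mul_eq_zero.mp hk with h|h
      · exact h
      · exact absurd h hD.ne'
    have hconst : ∀ u ∈ Ioo (a/(a+b)) 1, ∀ v ∈ Ioo (a/(a+b)) 1, u < v → ψ u = ψ v := by
      intro u hu v hv huv
      have hsub : Icc u v ⊆ Ioo (a/(a+b)) 1 := fun s hs =>
        ⟨lt_of_lt_of_le hu.1 hs.1, lt_of_le_of_lt hs.2 hv.2⟩
      have hcont : ContinuousOn ψ (Icc u v) := fun s hs =>
        ((hψdiff s (hsub hs)).continuousAt).continuousWithinAt
      have hdiffOn : DifferentiableOn ℝ ψ (Ioo u v) := fun s hs =>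
        (hψdiff s (hsub (Ioo_subset_Icc_self hs))).differentiableWithinAt
      obtain ⟨m, hm, hm0⟩ := exists_deriv_eq_slope ψ huv hcont hdiffOn
      rw [hψd0 m (hsub (Ioo_subset_Icc_self hm))] at hm0
      have : v - u ≠ 0 := by linarith
      field_simp at hm0
      linarith
    -- extract two roots of f
    have h2card : (1:ℕ∞) < {t ∈ Set.Ioo (0:ℝ) 1 | f t = 0}.encard :=
      lt_of_lt_of_le (by norm_num) hcon
    obtain ⟨u, v, hu, hv, huv⟩ := Set.one_lt_encard_iff.mp h2card
    -- order them
    rcases lt_or_gt_of_ne huv with h|h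
    · obtain ⟨m, hmuv, hm0, hm01⟩ := rolle2 u v hu.1 hv.1 hu.2 hv.2 h
      obtain ⟨hmJ, hψm⟩ := claim1 m hm01 hm0
      have hvJ : v ∈ Ioo (a/(a+b)) 1 := ⟨lt_trans hmJ.1 hmuv.2, hv.1.2⟩
      have hψv : ψ v = 0 := by
        rw [← hconst m hmJ v hvJ hmuv.2]; exact hψm
      exact hnd v hv.1 hv.2 (claim2 v hvJ hψv)
    · obtain ⟨m, hmuv, hm0, hm01⟩ := rolle2 v u hv.1 hu.1 hv.2 hu.2 h
      obtain ⟨hmJ, hψm⟩ := claim1 m hm01 hm0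
      have huJ : u ∈ Ioo (a/(a+b)) 1 := ⟨lt_trans hmJ.1 hmuv.2, hu.1.2⟩
      have hψu : ψ u = 0 := by
        rw [← hconst m hmJ u huJ hmuv.2]; exact hψm
      exact hnd u hu.1 hu.2 (claim2 u huJ hψu)
  · -- cubic has at most 3 roots
    have hsubP : {t ∈ Ioo (a/(a+b)) 1 | deriv ψ t = 0}
        ⊆ ((cubAB a b c d).roots.toFinset : Set ℝ) := by
      rintro t ⟨ht, h0⟩
      have hk := hkey t ht
      rw [h0, zero_mul] at hk
      simp only [Finset.coe_sort_coe, Multiset.mem_toFinset, Finset.mem_coe]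
      rw [Polynomial.mem_roots hP]
      exact hk.symm
    have hle3 : {t ∈ Ioo (a/(a+b)) 1 | deriv ψ t = 0}.encard ≤ 3 := by
      refine le_trans (Set.encard_le_encard hsubP) ?_
      rw [Set.encard_coe_eq_coe_finsetCard]
      have h1 : (cubAB a b c d).roots.toFinset.card ≤ Multiset.card (cubAB a b c d).roots :=
        Multiset.toFinset_card_le _
      have h2 := Polynomial.card_roots' (cubAB a b c d)
      have h3 := cubAB_natDegree a b c d
      exact_mod_cast le_trans h1 (le_trans h2 h3)
    have : ((4:ℕ):ℕ∞) ≤ 3 := le_trans h4' hle3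
    norm_num at this
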